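/- Requiring a zone partition with exactly N nonempty zones can worsen the optimum as N increases: there exists an instance of the zone tariff design problem (multiple counting) such that the minimum objective over zone partitions with exactly 2 nonempty zones is 0 while the minimum over zone partitions with exactly 3 nonempty zones is 1. Concretely, on the path graph with vertices v_1, v_2, v_3 and edges {v_1,v_2}, {v_2,v_3}, with OD pairs (v_1,v_2), (v_1,v_3), (v_2,v_3), each with one passenger, reference prices 1, 2, 2 respectively, and paths equal to the unique simple paths, the partition {{v_1,v_2},{v_3}} with a suitable price function achieves objective 0, while every partition into 3 nonempty zones together with any price function P : ℕ≥1 → ℝ≥0 has objective at least 1, and objective exactly 1 is achievable. -/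
import Mathlib


open scoped Classical
noncomputable section

/-- A zone partition of the vertex set `V`: nonempty, pairwise disjoint zones covering `V`. -/
def IsZonePartition {V : Type*} (Z : Finset (Finset V)) : Prop :=
  (∀ A ∈ Z, A.Nonempty) ∧ (∀ A ∈ Z, ∀ B ∈ Z, A ≠ B → Disjoint A B) ∧
    ∀ v : V, ∃ A ∈ Z, v ∈ A

/-- `v` and `w` lie in a common zone of `Z`. -/
def SameZone {V : Type*} (Z : Finset (Finset V)) (v w : V) : Prop :=
  ∃ A ∈ Z, v ∈ A ∧ w ∈ A

/-- Multiple-counting zone function: one plus the number of zone borders crossed along `W`. -/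
def sigmaM {V : Type*} (Z : Finset (Finset V)) (W : List V) : ℕ :=
  1 + ((W.zip W.tail).filter (fun p => decide (¬ SameZone Z p.1 p.2))).length

/-- Single-counting zone function: the number of distinct zones met by `W`. -/
def sigmaS {V : Type*} (Z : Finset (Finset V)) (W : List V) : ℕ :=
  (Z.filter (fun A => ∃ v ∈ W, v ∈ A)).card

/-- A zone is connected if the induced subgraph is connected. -/
def ZoneConnected {V : Type*} (G : SimpleGraph V) (A : Finset V) : Prop :=
  (G.induce (A : Set V)).Connected

/-- Objective value of the zone tariff design problem. -/
def zoneObj {V ι : Type*} (D : Finset ι) (r : ι → ℝ) (t : ι → ℕ) (Wd : ι → List V)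
    (σ : Finset (Finset V) → List V → ℕ) (Z : Finset (Finset V)) (P : ℕ → ℝ) : ℝ :=
  ∑ d ∈ D, (t d : ℝ) * |r d - P (σ Z (Wd d))|

/-- Optimal (infimum) objective value over all feasible zone partitions and
nonnegative price functions. -/
def zStar {V ι : Type*} (D : Finset ι) (r : ι → ℝ) (t : ι → ℕ) (Wd : ι → List V)
    (σ : Finset (Finset V) → List V → ℕ) (feas : Finset (Finset V) → Prop) : ℝ :=
  sInf {x : ℝ | ∃ Z P, feas Z ∧ (∀ k, 0 ≤ P k) ∧ x = zoneObj D r t Wd σ Z P}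

/-- The path graph on three vertices v_0 - v_1 - v_2. -/
def pathGraph3 : SimpleGraph (Fin 3) :=
  SimpleGraph.fromRel (fun i j => (i : ℕ) + 1 = (j : ℕ))

lemma zoneObj_nonneg {V ι : Type*} (D : Finset ι) (r : ι → ℝ) (t : ι → ℕ) (Wd : ι → List V)
    (σ : Finset (Finset V) → List V → ℕ) (Z : Finset (Finset V)) (P : ℕ → ℝ) :
    0 ≤ zoneObj D r t Wd σ Z P :=
  Finset.sum_nonneg fun d _ => mul_nonneg (Nat.cast_nonneg _) (abs_nonneg _)

set_option maxRecDepth 100000 in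
lemma three_part (Z : Finset (Finset (Fin 3))) (h1 : IsZonePartition Z) (h2 : Z.card = 3) :
    Z = {{0},{1},{2}} := by
  revert h2 h1; unfold IsZonePartition; revert Z; decide

lemma sz_sing {v w : Fin 3} (h : SameZone ({{0},{1},{2}} : Finset (Finset (Fin 3))) v w) :
    v = w := by
  obtain ⟨A, hA, hv, hw⟩ := h
  fin_cases hA <;> simp_all

lemma nsz01 : ¬ SameZone ({{0},{1},{2}} : Finset (Finset (Fin 3))) 0 1 := fun h =>
  absurd (sz_sing h) (by decide)

lemma nsz12 : ¬ SameZone ({{0},{1},{2}} : Finset (Finset (Fin 3))) 1 2 := fun h =>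
  absurd (sz_sing h) (by decide)

lemma sigma3a : sigmaM ({{0},{1},{2}} : Finset (Finset (Fin 3))) [0,1] = 2 := by
  simp [sigmaM, List.filter_cons, nsz01]

lemma sigma3b : sigmaM ({{0},{1},{2}} : Finset (Finset (Fin 3))) [0,1,2] = 3 := by
  simp [sigmaM, List.filter_cons, nsz01, nsz12]

lemma sigma3c : sigmaM ({{0},{1},{2}} : Finset (Finset (Fin 3))) [1,2] = 2 := by
  simp [sigmaM, List.filter_cons, nsz12]

lemma sz01' : SameZone ({({0,1} : Finset (Fin 3)), {2}} : Finset (Finset (Fin 3))) 0 1 :=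
  ⟨{0,1}, by decide, by decide, by decide⟩

lemma nsz12' : ¬ SameZone ({({0,1} : Finset (Fin 3)), {2}} : Finset (Finset (Fin 3))) 1 2 := by
  rintro ⟨A, hA, hv, hw⟩; fin_cases hA <;> simp_all

lemma sigma2a : sigmaM ({({0,1} : Finset (Fin 3)), {2}} : Finset (Finset (Fin 3))) [0,1] = 1 := by
  simp [sigmaM, List.filter_cons, sz01']

lemma sigma2b : sigmaM ({({0,1} : Finset (Fin 3)), {2}} : Finset (Finset (Fin 3))) [0,1,2] = 2 := by
  simp [sigmaM, List.filter_cons, sz01', nsz12']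

lemma sigma2c : sigmaM ({({0,1} : Finset (Fin 3)), {2}} : Finset (Finset (Fin 3))) [1,2] = 2 := by
  simp [sigmaM, List.filter_cons, nsz12']

lemma zp2 : IsZonePartition ({({0,1} : Finset (Fin 3)), {2}} : Finset (Finset (Fin 3))) := by
  unfold IsZonePartition; refine ⟨?_, ?_, ?_⟩ <;> decide

lemma zp3 : IsZonePartition ({{0},{1},{2}} : Finset (Finset (Fin 3))) := by
  unfold IsZonePartition; refine ⟨?_, ?_, ?_⟩ <;> decide

example : (({({0,1} : Finset (Fin 3)), {2}} : Finset (Finset (Fin 3)))).card = 2 := by decide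
example : (({{0},{1},{2}} : Finset (Finset (Fin 3)))).card = 3 := by decide

lemma obj2 : zoneObj (Finset.univ : Finset (Fin 3)) (![1, 2, 2] : Fin 3 → ℝ) (fun _ => 1)
    ![([0, 1] : List (Fin 3)), [0, 1, 2], [1, 2]] sigmaM
    ({({0, 1} : Finset (Fin 3)), ({2} : Finset (Fin 3))} : Finset (Finset (Fin 3)))
    (fun k => if k = 1 then 1 else 2) = 0 := by
  simp [zoneObj, Fin.sum_univ_three, sigma2a, sigma2b, sigma2c]

lemma obj3 : zoneObj (Finset.univ : Finset (Fin 3)) (![1, 2, 2] : Fin 3 → ℝ) (fun _ => 1)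
    ![([0, 1] : List (Fin 3)), [0, 1, 2], [1, 2]] sigmaM
    ({{0},{1},{2}} : Finset (Finset (Fin 3))) (fun _ => 2) = 1 := by
  simp [zoneObj, Fin.sum_univ_three, sigma3a, sigma3b, sigma3c]
  norm_num

lemma obj3_lb (Z : Finset (Finset (Fin 3))) (P : ℕ → ℝ) (hZ : IsZonePartition Z)
    (hc : Z.card = 3) (hP : ∀ k, 0 ≤ P k) :
    1 ≤ zoneObj (Finset.univ : Finset (Fin 3)) (![1, 2, 2] : Fin 3 → ℝ) (fun _ => 1)
      ![([0, 1] : List (Fin 3)), [0, 1, 2], [1, 2]] sigmaM Z P := by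
  have hz3 := three_part Z hZ hc
  subst hz3
  have h : zoneObj (Finset.univ : Finset (Fin 3)) (![1, 2, 2] : Fin 3 → ℝ) (fun _ => 1)
      ![([0, 1] : List (Fin 3)), [0, 1, 2], [1, 2]] sigmaM
      ({{0},{1},{2}} : Finset (Finset (Fin 3))) P
      = |1 - P 2| + |2 - P 3| + |2 - P 2| := by
    simp [zoneObj, Fin.sum_univ_three, sigma3a, sigma3b, sigma3c]
  rw [h]
  have h1 : (1 : ℝ) ≤ |1 - P 2| + |2 - P 2| := by
    have := abs_add_le (1 - P 2) (P 2 - 2)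
    simp only [show (1 : ℝ) - P 2 + (P 2 - 2) = -1 by ring] at this
    rw [abs_sub_comm (P 2) 2] at this
    simpa using this
  have h2 : (0 : ℝ) ≤ |2 - P 3| := abs_nonneg _
  linarith

/-- Requiring exactly N nonempty zones can worsen the optimum as N increases: on the path
graph with three vertices, with OD pairs (v_0,v_1), (v_0,v_2), (v_1,v_2), one passenger
each, reference prices 1, 2, 2 and the unique simple paths (multiple counting), the
minimum objective over partitions into exactly 2 zones is 0 while the minimum over
partitions into exactly 3 zones is 1; concretely, the partition {{v_0,v_1},{v_2}} with a
suitable price function achieves objective 0, every partition into 3 nonempty zones has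
objective at least 1 for every nonnegative price function, and objective exactly 1 is
achievable with 3 zones. -/
theorem example_exactly_N_zones :
    zStar (Finset.univ : Finset (Fin 3)) (![1, 2, 2] : Fin 3 → ℝ) (fun _ => 1)
        ![([0, 1] : List (Fin 3)), [0, 1, 2], [1, 2]] sigmaM
        (fun Z => IsZonePartition Z ∧ Z.card = 2) = 0 ∧
      zStar (Finset.univ : Finset (Fin 3)) (![1, 2, 2] : Fin 3 → ℝ) (fun _ => 1)
        ![([0, 1] : List (Fin 3)), [0, 1, 2], [1, 2]] sigmaM
        (fun Z => IsZonePartition Z ∧ Z.card = 3) = 1 ∧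
      (∃ P : ℕ → ℝ, (∀ k, 0 ≤ P k) ∧
        zoneObj (Finset.univ : Finset (Fin 3)) (![1, 2, 2] : Fin 3 → ℝ) (fun _ => 1)
          ![([0, 1] : List (Fin 3)), [0, 1, 2], [1, 2]] sigmaM
          ({({0, 1} : Finset (Fin 3)), ({2} : Finset (Fin 3))} : Finset (Finset (Fin 3)))
          P = 0) ∧
      (∀ (Z : Finset (Finset (Fin 3))) (P : ℕ → ℝ), IsZonePartition Z → Z.card = 3 →
        (∀ k, 0 ≤ P k) →
        1 ≤ zoneObj (Finset.univ : Finset (Fin 3)) (![1, 2, 2] : Fin 3 → ℝ) (fun _ => 1)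
          ![([0, 1] : List (Fin 3)), [0, 1, 2], [1, 2]] sigmaM Z P) ∧
      ∃ (Z : Finset (Finset (Fin 3))) (P : ℕ → ℝ), IsZonePartition Z ∧ Z.card = 3 ∧
        (∀ k, 0 ≤ P k) ∧
        zoneObj (Finset.univ : Finset (Fin 3)) (![1, 2, 2] : Fin 3 → ℝ) (fun _ => 1)
          ![([0, 1] : List (Fin 3)), [0, 1, 2], [1, 2]] sigmaM Z P = 1 := by
  have card2 : (({({0,1} : Finset (Fin 3)), {2}} : Finset (Finset (Fin 3)))).card = 2 := by decide
  have card3 : (({{0},{1},{2}} : Finset (Finset (Fin 3)))).card = 3 := by decide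
  have Ppos : ∀ k : ℕ, (0:ℝ) ≤ if k = 1 then 1 else 2 := fun k => by split <;> norm_num
  have mem0 : (0 : ℝ) ∈ {x : ℝ | ∃ Z P, (IsZonePartition Z ∧ Z.card = 2) ∧ (∀ k, 0 ≤ P k) ∧
      x = zoneObj (Finset.univ : Finset (Fin 3)) (![1, 2, 2] : Fin 3 → ℝ) (fun _ => 1)
        ![([0, 1] : List (Fin 3)), [0, 1, 2], [1, 2]] sigmaM Z P} :=
    ⟨{({0,1} : Finset (Fin 3)), {2}}, fun k => if k = 1 then 1 else 2, ⟨zp2, card2⟩,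
      Ppos, obj2.symm⟩
  have mem1 : (1 : ℝ) ∈ {x : ℝ | ∃ Z P, (IsZonePartition Z ∧ Z.card = 3) ∧ (∀ k, 0 ≤ P k) ∧
      x = zoneObj (Finset.univ : Finset (Fin 3)) (![1, 2, 2] : Fin 3 → ℝ) (fun _ => 1)
        ![([0, 1] : List (Fin 3)), [0, 1, 2], [1, 2]] sigmaM Z P} :=
    ⟨{{0},{1},{2}}, fun _ => 2, ⟨zp3, card3⟩, fun _ => by norm_num, obj3.symm⟩
  refine ⟨?_, ?_, ?_, obj3_lb, ?_⟩
  · apply le_antisymm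
    · refine csInf_le ⟨0, ?_⟩ mem0
      rintro x ⟨Z, P, _, _, rfl⟩
      exact zoneObj_nonneg _ _ _ _ _ _ _
    · refine le_csInf ⟨0, mem0⟩ ?_
      rintro x ⟨Z, P, _, _, rfl⟩
      exact zoneObj_nonneg _ _ _ _ _ _ _
  · apply le_antisymm
    · refine csInf_le ⟨0, ?_⟩ mem1
      rintro x ⟨Z, P, _, _, rfl⟩
      exact zoneObj_nonneg _ _ _ _ _ _ _
    · refine le_csInf ⟨1, mem1⟩ ?_
      rintro x ⟨Z, P, ⟨hZ, hc⟩, hP, rfl⟩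
      exact obj3_lb Z P hZ hc hP
  · exact ⟨fun k => if k = 1 then 1 else 2, Ppos, obj2⟩
  · exact ⟨{{0},{1},{2}}, fun _ => 2, zp3, card3, fun _ => by norm_num, obj3⟩
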